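/- The dynamic-programming recursion for the maximal upper set value is correct: with M(i,j) = max over U ∈ ũ(i,j) of H(U), where H(U) = Σ_{x_t ∈ U} w_t(y_t − b) for a fixed constant b, and xᵢ = (i,l), it holds that M(i,j) = M(i+1,j) + wᵢ(yᵢ − b) if j ≤ l, and M(i,j) = max(M(i+1,j), M(i,l)) if j > l. -/

import Mathlib

/-- Correctness of the dynamic-programming recursion for the maximal upper set
value: with `M(i,j) = max_{U ∈ ũ(i,j)} H(U)` for `H(U) = Σ_{x_t ∈ U} w_t(y_t − b)`
and `xᵢ = (i, l(i))`, we have `M(i,j) = M(i+1,j) + wᵢ(yᵢ − b)` when `j ≤ l(i)`,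
and `M(i,j) = max(M(i+1,j), M(i, l(i)))` when `j > l(i)`. -/
theorem stmt17 (n : ℕ) (l : ℕ → ℕ) (w y : ℕ → ℝ) (b : ℝ) (hw : ∀ i, 0 < w i)
    (X : Finset (ℕ × ℕ))
    (hX : X = (Finset.Icc 1 n).image (fun i => (i, l i)))
    (u : ℕ → ℕ → Finset (ℕ × ℕ))
    (hu : ∀ i j, u i j = X.filter (fun p => i ≤ p.1 ∧ j ≤ p.2))
    (ut : ℕ → ℕ → Set (Finset (ℕ × ℕ)))
    (hut : ∀ i j, ut i j = {U | U ⊆ X ∧ u i j ⊆ U ∧ (∀ p ∈ U, i ≤ p.1) ∧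
      ∀ a ∈ U, ∀ c ∈ X, a.1 ≤ c.1 → a.2 ≤ c.2 → c ∈ U})
    (H : Finset (ℕ × ℕ) → ℝ)
    (hH : ∀ U, H U = ∑ p ∈ U, w p.1 * (y p.1 - b))
    (M : ℕ → ℕ → ℝ)
    (hM : ∀ i j, IsGreatest (H '' ut i j) (M i j))
    (i j : ℕ) (hi : 1 ≤ i) (hin : i ≤ n) :
    (j ≤ l i → M i j = M (i + 1) j + w i * (y i - b)) ∧
    (l i < j → M i j = max (M (i + 1) j) (M i (l i))) := by
  have hxiX : (i, l i) ∈ X := by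
    rw [hX]; exact Finset.mem_image.2 ⟨i, Finset.mem_Icc.2 ⟨hi, hin⟩, rfl⟩
  have huniq : ∀ p ∈ X, p.1 = i → p = (i, l i) := by
    intro p hp hpi
    rw [hX] at hp
    obtain ⟨t, _, rfl⟩ := Finset.mem_image.1 hp
    have : t = i := hpi
    subst this; rfl
  constructor
  · -- case j ≤ l i
    intro hjl
    obtain ⟨h1mem, h1ub⟩ := hM i j
    obtain ⟨h2mem, h2ub⟩ := hM (i+1) j
    obtain ⟨V, hVm, hHV⟩ := h1mem
    obtain ⟨V', hV'm, hHV'⟩ := h2mem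
    rw [hut] at hVm hV'm
    obtain ⟨hVX, hVu, hVi, hVc⟩ := hVm
    obtain ⟨hV'X, hV'u, hV'i, hV'c⟩ := hV'm
    have hxiu : (i, l i) ∈ u i j := by
      rw [hu]; exact Finset.mem_filter.2 ⟨hxiX, le_refl i, hjl⟩
    have hxiV : (i, l i) ∈ V := hVu hxiu
    have key1 : V.erase (i, l i) ∈ ut (i+1) j := by
      rw [hut]
      refine ⟨(Finset.erase_subset _ _).trans hVX, ?_, ?_, ?_⟩
      · intro p hp
        rw [hu] at hp
        obtain ⟨hpX, hp1, hp2⟩ := Finset.mem_filter.1 hp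
        refine Finset.mem_erase.2 ⟨?_, hVu ?_⟩
        · intro h
          rw [h] at hp1
          exact absurd hp1 (Nat.lt_irrefl i)
        · rw [hu]; exact Finset.mem_filter.2 ⟨hpX, by omega, hp2⟩
      · intro p hp
        obtain ⟨hpne, hpV⟩ := Finset.mem_erase.1 hp
        rcases eq_or_lt_of_le (hVi p hpV) with h | h
        · exact absurd (huniq p (hVX hpV) h.symm) hpne
        · omega
      · intro a ha c hc h1 h2
        obtain ⟨hane, haV⟩ := Finset.mem_erase.1 ha
        have hcV := hVc a haV c hc h1 h2
        refine Finset.mem_erase.2 ⟨?_, hcV⟩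
        have hai : i + 1 ≤ a.1 := by
          rcases eq_or_lt_of_le (hVi a haV) with h | h
          · exact absurd (huniq a (hVX haV) h.symm) hane
          · omega
        intro h
        rw [h] at h1
        have h1' : a.1 ≤ i := h1
        omega
    have hsum : H V = H (V.erase (i, l i)) + w i * (y i - b) := by
      rw [hH, hH]
      exact (Finset.sum_erase_add V _ hxiV).symm
    have hxinV' : (i, l i) ∉ V' := by
      intro h
      have : i + 1 ≤ i := hV'i _ h
      omega
    have husub : u i j ⊆ insert (i, l i) V' := by
      intro p hp
      rw [hu] at hp
      obtain ⟨hpX, hp1, hp2⟩ := Finset.mem_filter.1 hp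
      rcases eq_or_lt_of_le hp1 with h | h
      · exact Finset.mem_insert.2 (Or.inl (huniq p hpX h.symm))
      · exact Finset.mem_insert.2 (Or.inr (hV'u (by
          rw [hu]; exact Finset.mem_filter.2 ⟨hpX, by omega, hp2⟩)))
    have key2 : insert (i, l i) V' ∈ ut i j := by
      rw [hut]
      refine ⟨Finset.insert_subset hxiX hV'X, husub, ?_, ?_⟩
      · intro p hp
        rcases Finset.mem_insert.1 hp with h | h
        · rw [h]
        · have : i + 1 ≤ p.1 := hV'i p h
          omega
      · intro a ha c hc h1 h2
        rcases Finset.mem_insert.1 ha with h | h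
        · subst h
          apply husub
          rw [hu]
          refine Finset.mem_filter.2 ⟨hc, h1, ?_⟩
          have hl2 : l i ≤ c.2 := h2
          omega
        · exact Finset.mem_insert.2 (Or.inr (hV'c a h c hc h1 h2))
    have hsum2 : H (insert (i, l i) V') = H V' + w i * (y i - b) := by
      rw [hH, hH, Finset.sum_insert hxinV']
      ring
    have le1 : M i j ≤ M (i+1) j + w i * (y i - b) := by
      rw [← hHV, hsum]
      have := h2ub ⟨_, key1, rfl⟩
      linarith
    have le2 : M (i+1) j + w i * (y i - b) ≤ M i j := by
      have := h1ub ⟨_, key2, rfl⟩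
      rw [hsum2, hHV'] at this
      linarith
    linarith
  · -- case l i < j
    intro hlj
    obtain ⟨h1mem, h1ub⟩ := hM i j
    obtain ⟨h2mem, h2ub⟩ := hM (i+1) j
    obtain ⟨h3mem, h3ub⟩ := hM i (l i)
    obtain ⟨V, hVm, hHV⟩ := h1mem
    obtain ⟨V2, hV2m, hHV2⟩ := h2mem
    obtain ⟨V3, hV3m, hHV3⟩ := h3mem
    rw [hut] at hVm hV2m hV3m
    obtain ⟨hVX, hVu, hVi, hVc⟩ := hVm
    obtain ⟨hV2X, hV2u, hV2i, hV2c⟩ := hV2m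
    obtain ⟨hV3X, hV3u, hV3i, hV3c⟩ := hV3m
    have huu : u i j = u (i+1) j := by
      rw [hu, hu]
      ext p
      simp only [Finset.mem_filter]
      constructor
      · rintro ⟨hpX, hp1, hp2⟩
        refine ⟨hpX, ?_, hp2⟩
        rcases eq_or_lt_of_le hp1 with h | h
        · have hpe := huniq p hpX h.symm
          have : j ≤ l i := by rw [hpe] at hp2; exact hp2
          omega
        · omega
      · rintro ⟨hpX, hp1, hp2⟩
        exact ⟨hpX, by omega, hp2⟩
    have hub : M i j ≤ max (M (i+1) j) (M i (l i)) := by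
      by_cases hxi : (i, l i) ∈ V
      · have hm : V ∈ ut i (l i) := by
          rw [hut]
          refine ⟨hVX, ?_, hVi, hVc⟩
          intro p hp
          rw [hu] at hp
          obtain ⟨hpX, hp1, hp2⟩ := Finset.mem_filter.1 hp
          exact hVc (i, l i) hxi p hpX hp1 hp2
        have := h3ub ⟨V, hm, rfl⟩
        rw [hHV] at this
        exact this.trans (le_max_right _ _)
      · have hm : V ∈ ut (i+1) j := by
          rw [hut]
          refine ⟨hVX, ?_, ?_, hVc⟩
          · rw [← huu]; exact hVu
          · intro p hp
            rcases eq_or_lt_of_le (hVi p hp) with h | h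
            · exact absurd (huniq p (hVX hp) h.symm ▸ hp) hxi
            · omega
        have := h2ub ⟨V, hm, rfl⟩
        rw [hHV] at this
        exact this.trans (le_max_left _ _)
    have hge1 : M (i+1) j ≤ M i j := by
      have hm : V2 ∈ ut i j := by
        rw [hut]
        refine ⟨hV2X, ?_, fun p hp => by have := hV2i p hp; omega, hV2c⟩
        rw [huu]; exact hV2u
      have := h1ub ⟨V2, hm, rfl⟩
      rw [hHV2] at this; exact this
    have hge2 : M i (l i) ≤ M i j := by
      have hm : V3 ∈ ut i j := by
        rw [hut]
        refine ⟨hV3X, ?_, hV3i, hV3c⟩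
        intro p hp
        rw [hu] at hp
        obtain ⟨hpX, hp1, hp2⟩ := Finset.mem_filter.1 hp
        exact hV3u (by rw [hu]; exact Finset.mem_filter.2 ⟨hpX, hp1, by omega⟩)
      have := h1ub ⟨V3, hm, rfl⟩
      rw [hHV3] at this; exact this
    exact le_antisymm hub (max_le hge1 hge2)
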